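/- Let Φ be a p(p−j) × p² binary matrix (p prime, j ∈ {1,2}, p−j ≥ 2) with exactly p−j ones per column and pairwise column overlaps at most 1, and let H be a (p−j) × (p−j) Hadamard matrix (entries ±1 with H Hᵀ = (p−j)I). Form Ψ by replacing, in each column of Φ (repeated for each row of H), the r-th 1-entry by the corresponding entry of the r-th coordinate of a fixed row of H, giving a ternary matrix of size p(p−j) × p²(p−j). Then the coherence of Ψ is at most 1/(p−j). -/

import Mathlib

open scoped Classical

/-- The ternary matrix Ψ obtained by modulating the ones of each column of
the Euler-square binary matrix Φ with rows of a Hadamard matrix H has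
coherence at most 1/(p−j). -/
theorem ternary_hadamard_coherence
    (p j : ℕ) (hp : p.Prime) (hj : j = 1 ∨ j = 2) (hq : 2 ≤ p - j)
    (Φ : Matrix (Fin (p * (p - j))) (Fin (p * p)) ℝ)
    (hbin : ∀ i c, Φ i c = 0 ∨ Φ i c = 1)
    (hones : ∀ c, (Finset.univ.filter fun i => Φ i c = 1).card = p - j)
    (hoverlap : ∀ c d, c ≠ d →
      (Finset.univ.filter fun i => Φ i c = 1 ∧ Φ i d = 1).card ≤ 1)
    (H : Matrix (Fin (p - j)) (Fin (p - j)) ℝ)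
    (hH : ∀ r t, H r t = 1 ∨ H r t = -1)
    (hHorth : ∀ r s, r ≠ s → ∑ t, H r t * H s t = 0)
    (e : Fin (p * p) → Fin (p - j) → Fin (p * (p - j)))
    (he : ∀ c, Function.Injective (e c))
    (heΦ : ∀ c r, Φ (e c r) c = 1)
    (heSupp : ∀ c i, Φ i c = 1 → ∃ r, i = e c r)
    (Ψ : Matrix (Fin (p * (p - j))) (Fin (p * p) × Fin (p - j)) ℝ)
    (hΨ₁ : ∀ c h r, Ψ (e c r) (c, h) = H h r)
    (hΨ₀ : ∀ c h i, (∀ r, i ≠ e c r) → Ψ i (c, h) = 0)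
    (x y : Fin (p * p) × Fin (p - j)) (hxy : x ≠ y) :
    |∑ i, Ψ i x * Ψ i y| /
      (Real.sqrt (∑ i, Ψ i x ^ 2) * Real.sqrt (∑ i, Ψ i y ^ 2)) ≤
      1 / ((p : ℝ) - j) := by
  obtain ⟨c, h⟩ := x
  obtain ⟨d, h'⟩ := y
  have hjp : j ≤ p := by omega
  have hcast : ((p - j : ℕ) : ℝ) = (p : ℝ) - j := by
    push_cast [hjp]; ring
  have hq' : (0 : ℝ) < (p : ℝ) - j := by
    rw [← hcast]; exact_mod_cast (by omega : 0 < p - j)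
  have hHabs : ∀ r t, |H r t| = 1 := fun r t => by
    rcases hH r t with hrt | hrt <;> simp [hrt]
  -- key reduction of sums over the support
  have key : ∀ (c : Fin (p * p)) (h : Fin (p - j)) (g : Fin (p * (p - j)) → ℝ),
      ∑ i, Ψ i (c, h) * g i = ∑ r, H h r * g (e c r) := by
    intro c h g
    have h1 : ∑ i, Ψ i (c, h) * g i
        = ∑ i ∈ Finset.univ.image (e c), Ψ i (c, h) * g i := by
      refine (Finset.sum_subset (Finset.subset_univ _) ?_).symm
      intro i _ hi
      have hz : ∀ r, i ≠ e c r := fun r hr =>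
        hi (Finset.mem_image.mpr ⟨r, Finset.mem_univ r, hr.symm⟩)
      rw [hΨ₀ c h i hz, zero_mul]
    rw [h1, Finset.sum_image (fun a _ b _ hab => he c hab)]
    simp only [hΨ₁]
  -- column norms
  have norm : ∀ (c : Fin (p * p)) (h : Fin (p - j)),
      ∑ i, Ψ i (c, h) ^ 2 = ((p - j : ℕ) : ℝ) := by
    intro c h
    simp_rw [sq]
    rw [key c h (fun i => Ψ i (c, h))]
    simp only [hΨ₁]
    have h1 : ∀ r, H h r * H h r = 1 := fun r => by
      rcases hH h r with hr | hr <;> rw [hr] <;> norm_num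
    simp [h1]
  have hnorm : Real.sqrt (∑ i, Ψ i (c, h) ^ 2) * Real.sqrt (∑ i, Ψ i (d, h') ^ 2)
      = (p : ℝ) - j := by
    rw [norm c h, norm d h', Real.mul_self_sqrt (by positivity), hcast]
  rw [hnorm]
  rw [key c h (fun i => Ψ i (d, h'))]
  by_cases hcd : c = d
  · subst hcd
    have hhh : h ≠ h' := fun hh => hxy (by rw [hh])
    have : ∑ r, H h r * Ψ (e c r) (c, h') = ∑ r, H h r * H h' r := by
      simp only [hΨ₁]
    rw [this, hHorth h h' hhh, abs_zero, zero_div]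
    positivity
  · -- different Φ-columns: inner product at most 1 in absolute value
    have hb : |∑ r, H h r * Ψ (e c r) (d, h')| ≤ 1 := by
      set S := Finset.univ.filter (fun r => Ψ (e c r) (d, h') ≠ 0) with hS
      have habs : ∀ r, |H h r * Ψ (e c r) (d, h')| ≤ if r ∈ S then 1 else 0 := by
        intro r
        by_cases hr : Ψ (e c r) (d, h') = 0
        · have : r ∉ S := by simp [hS, hr]
          simp [hr, this]
        · have hrS : r ∈ S := by simp [hS, hr]
          obtain ⟨s, hs⟩ : ∃ s, e c r = e d s := by
            by_contra hcon
            push_neg at hcon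
            exact hr (hΨ₀ d h' (e c r) hcon)
          rw [hs, hΨ₁, abs_mul, hHabs, hHabs]
          simp [hrS]
      have hcardS : S.card ≤ 1 := by
        refine le_trans ?_ (hoverlap c d hcd)
        refine Finset.card_le_card_of_injOn (e c) ?_ ?_
        · intro r hr
          simp only [hS, Finset.mem_coe, Finset.mem_filter, Finset.mem_univ, true_and] at hr
          obtain ⟨s, hs⟩ : ∃ s, e c r = e d s := by
            by_contra hcon
            push_neg at hcon
            exact hr (hΨ₀ d h' (e c r) hcon)
          simp only [Finset.mem_coe, Finset.mem_filter, Finset.mem_univ, true_and]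
          exact ⟨heΦ c r, by rw [hs]; exact heΦ d s⟩
        · exact fun a _ b _ hab => he c hab
      calc |∑ r, H h r * Ψ (e c r) (d, h')|
          ≤ ∑ r, |H h r * Ψ (e c r) (d, h')| := Finset.abs_sum_le_sum_abs _ _
        _ ≤ ∑ r, (if r ∈ S then (1 : ℝ) else 0) :=
            Finset.sum_le_sum fun r _ => habs r
        _ = (S.card : ℝ) := by
            rw [Finset.sum_ite_mem, Finset.univ_inter, Finset.sum_const,
              nsmul_eq_mul, mul_one]
        _ ≤ 1 := by exact_mod_cast hcardS
    gcongr
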